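/- Set λ = 3/2. There exists a sequence of real polynomials (p_k)_{k ≥ 1} such that: p_1(X) = X; for every k ≥ 2, p_k has degree exactly k, constant term p_k(0) = 0, value p_k(1) = 1, positive leading coefficient, and satisfies the functional equation p_k(λx) − λ·p_k(x) = (λ − 1) · Σ_{j=1}^{k−1} C(k,j)·p_j(x)·p_{k−j}(x) for all x ∈ ℝ; and for every n ≥ 0 and k ≥ 1, the k-th moment of the number of cycles over the uniform distribution on the nonsimple binary butterfly permutations B_{2^n} satisfies (1/2^{2^n − 1}) · Σ_{σ ∈ B_{2^n}} C(σ)^k = p_k((3/2)^n). -/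

import Mathlib

/-- Kronecker product of permutations: `(i, r) ↦ (σ i, π r)` under the
row-major identification `Fin (a * b) ≃ Fin a × Fin b`. -/
def permKron {a b : ℕ} (σ : Equiv.Perm (Fin a)) (π : Equiv.Perm (Fin b)) :
    Equiv.Perm (Fin (a * b)) :=
  finProdFinEquiv.symm.trans ((Equiv.prodCongr σ π).trans finProdFinEquiv)

/-- Direct (block) sum of permutations: `(i, r) ↦ (i, π i r)`. -/
def permBlockSum {a b : ℕ} (π : Fin a → Equiv.Perm (Fin b)) :
    Equiv.Perm (Fin (a * b)) :=
  finProdFinEquiv.symm.trans ((Equiv.prodCongrRight π).trans finProdFinEquiv)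

/-- The simple `m`-nary butterfly permutations of `Fin (m ^ n)`:
Kronecker products `τ^{a₁} ⊗ ⋯ ⊗ τ^{aₙ}` of powers of the standard `m`-cycle `τ = finRotate m`. -/
def simpleButterfly (m : ℕ) : (n : ℕ) → Set (Equiv.Perm (Fin (m ^ n)))
  | 0 => {1}
  | n + 1 =>
    {σ | ∃ (a : ℤ) (π : Equiv.Perm (Fin (m ^ n))), π ∈ simpleButterfly m n ∧
      σ = (finCongr (pow_succ' m n).symm).permCongr (permKron (finRotate m ^ a) π)}

/-- The nonsimple `m`-nary butterfly permutations of `Fin (m ^ n)`: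
`B₀ = {1}`, `B_{n+1} = {(τ^a ⊗ id) ∘ (σ₁ ⊕ ⋯ ⊕ σ_m) : σᵢ ∈ B_n}`. -/
def nonsimpleButterfly (m : ℕ) : (n : ℕ) → Set (Equiv.Perm (Fin (m ^ n)))
  | 0 => {1}
  | n + 1 =>
    {σ | ∃ (a : ℤ) (π : Fin m → Equiv.Perm (Fin (m ^ n))),
      (∀ i, π i ∈ nonsimpleButterfly m n) ∧
      σ = (finCongr (pow_succ' m n).symm).permCongr
        (permKron (finRotate m ^ a) 1 * permBlockSum π)}

/-- The length of the longest increasing subsequence of a permutation. -/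
noncomputable def LIS {M : ℕ} (σ : Equiv.Perm (Fin M)) : ℕ :=
  sSup {k | ∃ t : Finset (Fin M), t.card = k ∧ StrictMonoOn (⇑σ) ↑t}

/-- The length of the longest decreasing subsequence of a permutation. -/
noncomputable def LDS {M : ℕ} (σ : Equiv.Perm (Fin M)) : ℕ :=
  sSup {k | ∃ t : Finset (Fin M), t.card = k ∧ StrictAntiOn (⇑σ) ↑t}

/-- The number of cycles in the disjoint cycle decomposition of `σ`,
counting fixed points as cycles of length 1. -/
def numCycles {M : ℕ} (σ : Equiv.Perm (Fin M)) : ℕ :=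
  Multiset.card σ.cycleType + (Finset.univ.filter fun x => σ x = x).card

/-- The number of fixed points of `σ`. -/
def numFixed {M : ℕ} (σ : Equiv.Perm (Fin M)) : ℕ :=
  (Finset.univ.filter fun x => σ x = x).card

section CycleAux

open Equiv Equiv.Perm

variable {α β : Type*}

def scSetoid (σ : Perm α) : Setoid α :=
  ⟨σ.SameCycle, ⟨fun x => Equiv.Perm.SameCycle.refl σ x, Equiv.Perm.SameCycle.symm,
    Equiv.Perm.SameCycle.trans⟩⟩

noncomputable def ncyc (σ : Perm α) : ℕ := Nat.card (Quotient (scSetoid σ))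

lemma sameCycle_eq_of_fixed {σ : Perm α} {x y : α} (h : σ.SameCycle x y) (hx : σ x = x) :
    x = y := by
  obtain ⟨k, hk⟩ := h
  rw [← hk, zpow_apply_eq_self_of_apply_eq_self hx]

lemma numCycles_eq_ncyc {M : ℕ} (σ : Perm (Fin M)) : numCycles σ = ncyc σ := by
  classical
  show Multiset.card σ.cycleType + (Finset.univ.filter fun x => σ x = x).card = _
  have hcard : Multiset.card σ.cycleType = σ.cycleFactorsFinset.card := by
    rw [cycleType_def, Multiset.card_map]; rfl
  rw [hcard]
  let f : Fin M → {c // c ∈ σ.cycleFactorsFinset} ⊕ {x // σ x = x} := fun x =>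
    if h : x ∈ σ.support then Sum.inl ⟨σ.cycleOf x, (cycleOf_mem_cycleFactorsFinset_iff).2 h⟩
    else Sum.inr ⟨x, by simpa [Equiv.Perm.mem_support] using h⟩
  have hwd : ∀ x y : Fin M, (scSetoid σ).r x y → f x = f y := by
    rintro x y (hxy : σ.SameCycle x y)
    by_cases hx : x ∈ σ.support
    · have hy : y ∈ σ.support := hxy.mem_support_iff.1 hx
      simp only [f, dif_pos hx, dif_pos hy, hxy.cycleOf_eq]
    · have hy : y ∉ σ.support := fun hy => hx (hxy.mem_support_iff.2 hy)
      have hxx : σ x = x := by simpa [Equiv.Perm.mem_support] using hx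
      have := sameCycle_eq_of_fixed hxy hxx
      simp only [f, dif_neg hx, dif_neg hy, this]
  have e : Quotient (scSetoid σ) ≃ {c // c ∈ σ.cycleFactorsFinset} ⊕ {x // σ x = x} := by
    refine Equiv.ofBijective (Quotient.lift f hwd) ⟨?_, ?_⟩
    · rintro ⟨x⟩ ⟨y⟩ h
      have h' : f x = f y := h
      apply Quotient.sound
      by_cases hx : x ∈ σ.support <;> by_cases hy : y ∈ σ.support
      · simp only [f, dif_pos hx, dif_pos hy, Sum.inl.injEq, Subtype.mk.injEq] at h'
        have hy' : y ∈ (σ.cycleOf x).support := by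
          rw [h']; exact mem_support_cycleOf_iff.2 ⟨SameCycle.refl _ _, hy⟩
        exact (mem_support_cycleOf_iff.1 hy').1
      · simp only [f, dif_pos hx, dif_neg hy, reduceCtorEq] at h'
      · simp only [f, dif_neg hx, dif_pos hy, reduceCtorEq] at h'
      · simp only [f, dif_neg hx, dif_neg hy, Sum.inr.injEq, Subtype.mk.injEq] at h'
        exact h' ▸ (scSetoid σ).refl x
    · rintro (⟨c, hc⟩ | ⟨x, hx⟩)
      · have hc' := (mem_cycleFactorsFinset_iff).1 hc
        obtain ⟨x, hx⟩ := hc'.1.nonempty_support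
        have hxs : x ∈ σ.support := mem_cycleFactorsFinset_support_le hc hx
        refine ⟨⟦x⟧, ?_⟩
        show f x = _
        simp only [f, dif_pos hxs, Sum.inl.injEq, Subtype.mk.injEq]
        exact (cycle_is_cycleOf hx hc).symm
      · refine ⟨⟦x⟧, ?_⟩
        show f x = _
        have : x ∉ σ.support := by simp [Equiv.Perm.mem_support, hx]
        simp only [f, dif_neg this]
  rw [ncyc, Nat.card_congr e]
  simp [Nat.card_eq_fintype_card, Fintype.card_sum, Fintype.card_subtype]

/-- `permCongr` as a `MulEquiv`. -/
def permCongrM (e : α ≃ β) : Perm α ≃* Perm β :=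
  { e.permCongr with
    map_mul' := fun p q => by
      ext x
      simp [Equiv.permCongr_apply, Equiv.Perm.mul_apply] }

lemma permCongrM_coe (e : α ≃ β) (p : Perm α) : permCongrM e p = e.permCongr p := rfl

lemma permCongr_mul' (e : α ≃ β) (p q : Perm α) :
    e.permCongr (p * q) = e.permCongr p * e.permCongr q := by
  rw [← permCongrM_coe, ← permCongrM_coe, ← permCongrM_coe, map_mul]

lemma permCongr_permCongr {γ : Type*} (e : α ≃ β) (f : β ≃ γ) (p : Perm α) :
    f.permCongr (e.permCongr p) = (e.trans f).permCongr p := by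
  ext x; simp

lemma permCongr_zpow (e : α ≃ β) (σ : Perm α) (k : ℤ) :
    (e.permCongr σ) ^ k = e.permCongr (σ ^ k) := by
  rw [← permCongrM_coe, ← permCongrM_coe, ← map_zpow]

lemma sameCycle_permCongr (e : α ≃ β) (σ : Perm α) (x y : α) :
    (e.permCongr σ).SameCycle (e x) (e y) ↔ σ.SameCycle x y := by
  constructor
  · rintro ⟨k, hk⟩
    refine ⟨k, ?_⟩
    rw [permCongr_zpow] at hk
    simp only [Equiv.permCongr_apply, Equiv.symm_apply_apply] at hk
    exact e.injective hk
  · rintro ⟨k, hk⟩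
    refine ⟨k, ?_⟩
    rw [permCongr_zpow]
    simp [Equiv.permCongr_apply, Equiv.symm_apply_apply, hk]

lemma ncyc_permCongr (e : α ≃ β) (σ : Perm α) : ncyc (e.permCongr σ) = ncyc σ := by
  rw [ncyc, ncyc]
  refine (Nat.card_congr (Quotient.congr e ?_)).symm
  intro a b
  show σ.SameCycle a b ↔ (e.permCongr σ).SameCycle (e a) (e b)
  exact (sameCycle_permCongr e σ a b).symm

/-- pointwise product hom for prodCongrRight -/
def prodCongrRightHom (α β : Type*) : (α → Perm β) →* Perm (α × β) where
  toFun := Equiv.prodCongrRight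
  map_one' := by ext ⟨i, r⟩ <;> simp
  map_mul' := fun π ρ => by ext ⟨i, r⟩ <;> simp [Equiv.Perm.mul_apply]

lemma prodCongrRight_zpow (π : α → Perm β) (k : ℤ) :
    (Equiv.prodCongrRight π) ^ k = Equiv.prodCongrRight (fun i => π i ^ k) := by
  have := map_zpow (prodCongrRightHom α β) π k
  rw [prodCongrRightHom] at this
  exact this.symm

lemma prodCongrRight_mul (π ρ : α → Perm β) :
    Equiv.prodCongrRight π * Equiv.prodCongrRight ρ
      = Equiv.prodCongrRight (fun i => π i * ρ i) := by
  exact (map_mul (prodCongrRightHom α β) π ρ).symm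

lemma sameCycle_prodCongrRight (π : α → Perm β) (i j : α) (r s : β) :
    Equiv.Perm.SameCycle (Equiv.prodCongrRight π) (i, r) (j, s) ↔
      i = j ∧ (π i).SameCycle r s := by
  constructor
  · rintro ⟨k, hk⟩
    rw [prodCongrRight_zpow] at hk
    simp only [Equiv.prodCongrRight_apply, Prod.mk.injEq] at hk
    exact ⟨hk.1, k, hk.2⟩
  · rintro ⟨rfl, k, hk⟩
    exact ⟨k, by rw [prodCongrRight_zpow]; simp [hk]⟩

lemma ncyc_prodCongrRight_fin2 [Finite β] (π : Fin 2 → Perm β) :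
    ncyc (Equiv.prodCongrRight π) = ncyc (π 0) + ncyc (π 1) := by
  classical
  have htwo : ∀ i : Fin 2, i = 0 ∨ i = 1 := by decide
  let f : Fin 2 × β → Quotient (scSetoid (π 0)) ⊕ Quotient (scSetoid (π 1)) := fun p =>
    if p.1 = 0 then Sum.inl (Quotient.mk (scSetoid (π 0)) p.2)
    else Sum.inr (Quotient.mk (scSetoid (π 1)) p.2)
  have hwd : ∀ p q : Fin 2 × β, (scSetoid (Equiv.prodCongrRight π)).r p q → f p = f q := by
    rintro ⟨i, r⟩ ⟨j, s⟩ h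
    have h' := (sameCycle_prodCongrRight π i j r s).1 h
    obtain ⟨rfl, hsc⟩ := h'
    rcases htwo i with rfl | rfl
    · simp only [f, if_pos rfl]
      exact congrArg _ (Quot.sound hsc)
    · simp only [f, Fin.isValue, one_ne_zero, if_false, reduceIte]
      exact congrArg _ (Quot.sound hsc)
  have e : Quotient (scSetoid (Equiv.prodCongrRight π)) ≃
      Quotient (scSetoid (π 0)) ⊕ Quotient (scSetoid (π 1)) := by
    refine Equiv.ofBijective (Quotient.lift f hwd) ⟨?_, ?_⟩
    · rintro ⟨⟨i, r⟩⟩ ⟨⟨j, s⟩⟩ h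
      have h' : f (i, r) = f (j, s) := h
      apply Quot.sound
      rcases htwo i with rfl | rfl <;> rcases htwo j with rfl | rfl
      · simp only [f, reduceIte, Sum.inl.injEq] at h'
        exact (sameCycle_prodCongrRight π _ _ _ _).2 ⟨rfl, Quotient.exact h'⟩
      · simp only [f, Fin.isValue, one_ne_zero, reduceIte, reduceCtorEq] at h'
      · simp only [f, Fin.isValue, one_ne_zero, reduceIte, reduceCtorEq] at h'
      · simp only [f, Fin.isValue, one_ne_zero, reduceIte, Sum.inr.injEq] at h'
        exact (sameCycle_prodCongrRight π _ _ _ _).2 ⟨rfl, Quotient.exact h'⟩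
    · rintro (q | q)
      · induction q using Quotient.ind with
        | _ r => exact ⟨Quotient.mk _ ((0 : Fin 2), r), by simp [f]⟩
      · induction q using Quotient.ind with
        | _ r => exact ⟨Quotient.mk _ ((1 : Fin 2), r), by simp [f]⟩
  rw [ncyc, Nat.card_congr e, Nat.card_sum]; rfl

end CycleAux

section SwapAux

open Equiv Equiv.Perm

variable {β : Type*} (π : Fin 2 → Equiv.Perm β)

/-- block permutation with a swap on top -/
def swapBlk (π : Fin 2 → Equiv.Perm β) : Equiv.Perm (Fin 2 × β) :=
  (Equiv.prodCongr (finRotate 2) (1 : Equiv.Perm β)) * (Equiv.prodCongrRight π)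

lemma swapBlk_apply (i : Fin 2) (r : β) : swapBlk π (i, r) = (finRotate 2 i, π i r) := by
  simp [swapBlk, Equiv.Perm.mul_apply]

lemma w_vals : (finRotate 2 (0 : Fin 2) = 1) ∧ (finRotate 2 (1 : Fin 2) = 0) := by decide

lemma swapBlk_fst (x : Fin 2 × β) : ((swapBlk π) x).1 = finRotate 2 x.1 := by
  obtain ⟨i, r⟩ := x; rw [swapBlk_apply]

lemma swapBlk_pow_fst (n : ℕ) (x : Fin 2 × β) :
    ((swapBlk π ^ n) x).1 = (finRotate 2 ^ n) x.1 := by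
  induction n generalizing x with
  | zero => simp
  | succ n ih =>
    rw [pow_succ, pow_succ, Equiv.Perm.mul_apply, Equiv.Perm.mul_apply, ih, swapBlk_fst]

lemma swapBlk_zpow_fst (k : ℤ) (x : Fin 2 × β) :
    ((swapBlk π ^ k) x).1 = (finRotate 2 ^ k) x.1 := by
  cases k with
  | ofNat n => simpa using swapBlk_pow_fst π n x
  | negSucc n =>
    rw [zpow_negSucc, zpow_negSucc]
    set y := (swapBlk π ^ (n + 1))⁻¹ x with hy
    have : (swapBlk π ^ (n + 1)) y = x := by rw [hy]; simp
    have h1 : x.1 = (finRotate 2 ^ (n + 1)) y.1 := by rw [← this, swapBlk_pow_fst]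
    have := congrArg ((finRotate 2 ^ (n + 1))⁻¹ : Equiv.Perm (Fin 2)) h1
    simpa using this.symm

lemma swapBlk_sq : (swapBlk π) ^ 2 =
    Equiv.prodCongrRight (fun i => if i = 0 then π 1 * π 0 else π 0 * π 1) := by
  ext ⟨i, r⟩
  · rcases (by decide : ∀ j : Fin 2, j = 0 ∨ j = 1) i with rfl | rfl <;>
      simp [pow_succ, Equiv.Perm.mul_apply, swapBlk_apply, w_vals.1, w_vals.2]
  · rcases (by decide : ∀ j : Fin 2, j = 0 ∨ j = 1) i with rfl | rfl <;>
      simp [pow_succ, Equiv.Perm.mul_apply, swapBlk_apply, w_vals.1, w_vals.2]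

lemma swapBlk_two_mul (m : ℤ) (r : β) :
    (swapBlk π ^ (2 * m)) (0, r) = (0, ((π 1 * π 0) ^ m) r) := by
  rw [zpow_mul, ← (by norm_num : ((2:ℕ):ℤ) = 2), zpow_natCast, swapBlk_sq, prodCongrRight_zpow]
  simp

lemma sameCycle_swapBlk_zero (r t : β) :
    (swapBlk π).SameCycle (0, r) (0, t) ↔ (π 1 * π 0).SameCycle r t := by
  constructor
  · rintro ⟨k, hk⟩
    rcases Int.even_or_odd k with ⟨m, rfl⟩ | ⟨m, rfl⟩
    · have h2 : m + m = 2 * m := by ring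
      rw [h2, swapBlk_two_mul] at hk
      exact ⟨m, by simpa using congrArg Prod.snd hk⟩
    · exfalso
      have hfst := congrArg Prod.fst hk
      rw [swapBlk_zpow_fst] at hfst
      have hw : (finRotate 2 ^ (2 * m + 1) : Equiv.Perm (Fin 2)) = finRotate 2 := by
        rw [zpow_add, zpow_mul, ← (by norm_num : ((2:ℕ):ℤ) = 2), zpow_natCast]
        have : (finRotate 2 ^ (2:ℕ) : Equiv.Perm (Fin 2)) = 1 := by decide
        simp [this]
      rw [hw] at hfst
      simp [w_vals.1] at hfst
  · rintro ⟨m, hm⟩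
    exact ⟨2 * m, by rw [swapBlk_two_mul, hm]⟩

lemma sameCycle_swapBlk_glue (r : β) :
    (swapBlk π).SameCycle ((1 : Fin 2), r) ((0 : Fin 2), π 1 r) :=
  ⟨1, by rw [zpow_one, swapBlk_apply, w_vals.2]⟩

/-- projection to the zero block -/
def swapGlue : Fin 2 × β → β := fun p => if p.1 = 0 then p.2 else π 1 p.2

lemma sameCycle_glue (p : Fin 2 × β) :
    (swapBlk π).SameCycle ((0 : Fin 2), swapGlue π p) p := by
  obtain ⟨i, r⟩ := p
  rcases (by decide : ∀ j : Fin 2, j = 0 ∨ j = 1) i with rfl | rfl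
  · simp only [swapGlue, if_pos rfl]
    exact Equiv.Perm.SameCycle.refl _ _
  · simp only [swapGlue, Fin.isValue, one_ne_zero, if_false, reduceIte]
    exact (sameCycle_swapBlk_glue π r).symm

lemma ncyc_swapBlk [Finite β] : ncyc (swapBlk π) = ncyc (π 1 * π 0) := by
  have key : ∀ p q : Fin 2 × β, (swapBlk π).SameCycle p q →
      (π 1 * π 0).SameCycle (swapGlue π p) (swapGlue π q) := by
    intro p q h
    have h1 := ((sameCycle_glue π p).trans h).trans (sameCycle_glue π q).symm
    exact (sameCycle_swapBlk_zero π _ _).1 h1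
  have e : Quotient (scSetoid (swapBlk π)) ≃ Quotient (scSetoid (π 1 * π 0)) := by
    refine ⟨Quotient.lift (fun p => Quotient.mk (scSetoid (π 1 * π 0)) (swapGlue π p))
        (fun p q h => Quot.sound (key p q h)),
      Quotient.lift (fun r => Quotient.mk (scSetoid (swapBlk π)) ((0 : Fin 2), r))
        (fun r t h => Quot.sound ((sameCycle_swapBlk_zero π r t).2 h)), ?_, ?_⟩
    · rintro ⟨p⟩
      exact Quot.sound (sameCycle_glue π p)
    · rintro ⟨r⟩
      exact Quot.sound (Equiv.Perm.SameCycle.refl _ _)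
  rw [ncyc, ncyc, Nat.card_congr e]

end SwapAux
section StructAux

open Equiv Equiv.Perm

lemma permKron_eq {a b : ℕ} (σ : Equiv.Perm (Fin a)) (π : Equiv.Perm (Fin b)) :
    permKron σ π = finProdFinEquiv.permCongr (Equiv.prodCongr σ π) := by
  ext x; simp [permKron, Equiv.permCongr_apply]

lemma permBlockSum_eq {a b : ℕ} (π : Fin a → Equiv.Perm (Fin b)) :
    permBlockSum π = finProdFinEquiv.permCongr (Equiv.prodCongrRight π) := by
  ext x; simp [permBlockSum, Equiv.permCongr_apply]

/-- the global identification for the inductive step -/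
def bEquiv (n : ℕ) : Fin 2 × Fin (2 ^ n) ≃ Fin (2 ^ (n + 1)) :=
  finProdFinEquiv.trans (finCongr (pow_succ' 2 n).symm)

/-- product level building block -/
def bPerm (n : ℕ) (b : Bool) (π : Fin 2 → Perm (Fin (2 ^ n))) : Perm (Fin 2 × Fin (2 ^ n)) :=
  (cond b (Equiv.prodCongr (finRotate 2) (1 : Perm (Fin (2 ^ n)))) 1) *
    Equiv.prodCongrRight π

lemma prodCongr_one_one {α β : Type*} :
    Equiv.prodCongr (1 : Perm α) (1 : Perm β) = 1 := by
  ext ⟨i, r⟩ <;> simp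

lemma finRotate_two_zpow (a : ℤ) :
    (finRotate 2 : Perm (Fin 2)) ^ a = if Odd a then (finRotate 2 : Perm (Fin 2)) else 1 := by
  have h2 : (finRotate 2 : Perm (Fin 2)) ^ (2 : ℤ) = 1 := by
    rw [← (by norm_num : ((2:ℕ):ℤ) = 2), zpow_natCast]; decide
  rcases Int.even_or_odd a with ⟨m, rfl⟩ | ⟨m, rfl⟩
  · have he : ¬ Odd (m + m) := by
      rw [Int.not_odd_iff_even]; exact ⟨m, rfl⟩
    have h2m : m + m = 2 * m := by ring
    rw [if_neg he, h2m, zpow_mul, h2, one_zpow]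
  · rw [zpow_add, zpow_mul, h2, one_zpow, one_mul, zpow_one, if_pos ⟨m, rfl⟩]

lemma kron_blockSum_eq_bPerm {n : ℕ} (a : ℤ) (π : Fin 2 → Perm (Fin (2 ^ n))) :
    Equiv.prodCongr ((finRotate 2 : Perm (Fin 2)) ^ a) (1 : Perm (Fin (2 ^ n))) *
        Equiv.prodCongrRight π
      = bPerm n (decide (Odd a)) π := by
  rw [finRotate_two_zpow]
  by_cases h : Odd a
  · simp [bPerm, h]
  · simp [bPerm, h, prodCongr_one_one]

/-- membership characterization -/
lemma mem_butterfly_succ_iff {n : ℕ} (σ : Perm (Fin (2 ^ (n + 1)))) :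
    σ ∈ nonsimpleButterfly 2 (n + 1) ↔
      ∃ (b : Bool) (π : Fin 2 → Perm (Fin (2 ^ n))),
        (∀ i, π i ∈ nonsimpleButterfly 2 n) ∧ σ = (bEquiv n).permCongr (bPerm n b π) := by
  constructor
  · rintro ⟨a, π, hπ, rfl⟩
    refine ⟨decide (Odd a), π, hπ, ?_⟩
    rw [permKron_eq, permBlockSum_eq, ← permCongr_mul', permCongr_permCongr,
      kron_blockSum_eq_bPerm]
    rfl
  · rintro ⟨b, π, hπ, rfl⟩
    refine ⟨if b then 1 else 0, π, hπ, ?_⟩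
    rw [permKron_eq, permBlockSum_eq, ← permCongr_mul', permCongr_permCongr,
      kron_blockSum_eq_bPerm]
    cases b
    · norm_num [Int.odd_iff]; rfl
    · norm_num [Int.odd_iff]; rfl

lemma bPerm_mul {n : ℕ} (b₁ b₂ : Bool) (π ρ : Fin 2 → Perm (Fin (2 ^ n))) :
    bPerm n b₁ π * bPerm n b₂ ρ
      = bPerm n (xor b₁ b₂)
          (fun i => π ((cond b₂ (finRotate 2) 1) i) * ρ i) := by
  have hcomm : ∀ (ξ : Fin 2 → Perm (Fin (2 ^ n))),
      Equiv.prodCongrRight ξ * Equiv.prodCongr (finRotate 2) (1 : Perm (Fin (2 ^ n)))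
        = Equiv.prodCongr (finRotate 2) (1 : Perm (Fin (2 ^ n))) *
            Equiv.prodCongrRight (fun i => ξ (finRotate 2 i)) := by
    intro ξ
    ext ⟨i, r⟩ <;> simp [Equiv.Perm.mul_apply]
  have hWW : Equiv.prodCongr (finRotate 2) (1 : Perm (Fin (2 ^ n))) *
      Equiv.prodCongr (finRotate 2) (1 : Perm (Fin (2 ^ n))) = 1 := by
    have h : ∀ j : Fin 2, finRotate 2 (finRotate 2 j) = j := by decide
    ext ⟨i, r⟩
    · simp only [Equiv.Perm.mul_apply, Equiv.prodCongr_apply, Prod.map_fst, Prod.map_snd,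
        Equiv.Perm.one_apply, h]
    · simp [Equiv.Perm.mul_apply]
  cases b₁ <;> cases b₂ <;>
    simp only [bPerm, Bool.cond_true, Bool.cond_false, Bool.xor_false, Bool.xor_true,
      Bool.false_xor, Bool.true_xor, Bool.not_true, Bool.not_false, one_mul, mul_one]
  · rw [prodCongrRight_mul]
    simp
  · rw [← mul_assoc, hcomm, mul_assoc, prodCongrRight_mul]
  · rw [mul_assoc, prodCongrRight_mul]
    simp only [Equiv.Perm.one_apply]
  · rw [mul_assoc, ← mul_assoc (Equiv.prodCongrRight π), hcomm, ← mul_assoc, ← mul_assoc,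
      hWW, one_mul, prodCongrRight_mul]

lemma butterfly_mul_mem : ∀ (n : ℕ) (σ τ : Perm (Fin (2 ^ n))),
    σ ∈ nonsimpleButterfly 2 n → τ ∈ nonsimpleButterfly 2 n →
    σ * τ ∈ nonsimpleButterfly 2 n := by
  intro n
  induction n with
  | zero =>
    intro σ τ hσ hτ
    simp only [nonsimpleButterfly, Set.mem_singleton_iff] at *
    rw [hσ, hτ, one_mul]
  | succ n ih =>
    intro σ τ hσ hτ
    rw [mem_butterfly_succ_iff] at hσ hτ ⊢
    obtain ⟨b₁, π, hπ, rfl⟩ := hσ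
    obtain ⟨b₂, ρ, hρ, rfl⟩ := hτ
    refine ⟨xor b₁ b₂, fun i => π ((cond b₂ (finRotate 2) 1) i) * ρ i, ?_, ?_⟩
    · intro i
      exact ih _ _ (hπ _) (hρ _)
    · rw [← permCongr_mul', bPerm_mul]

end StructAux
section CountAux

open Equiv Equiv.Perm

/-- pair into a function on `Fin 2` -/
def pairFn {γ : Type*} (p q : γ) : Fin 2 → γ := fun i => if i = 0 then p else q

@[simp] lemma pairFn_zero {γ : Type*} (p q : γ) : pairFn p q 0 = p := rfl
@[simp] lemma pairFn_one {γ : Type*} (p q : γ) : pairFn p q 1 = q := rfl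

/-- parametrization of the inductive step -/
def Jmap (n : ℕ) (x : Bool × (Equiv.Perm (Fin (2 ^ n)) × Equiv.Perm (Fin (2 ^ n)))) :
    Equiv.Perm (Fin (2 ^ (n + 1))) :=
  (bEquiv n).permCongr (bPerm n x.1 (pairFn x.2.1 x.2.2))

lemma bPerm_apply {n : ℕ} (b : Bool) (π : Fin 2 → Perm (Fin (2 ^ n))) (i : Fin 2)
    (r : Fin (2 ^ n)) :
    bPerm n b π (i, r) = ((cond b (finRotate 2) 1 : Perm (Fin 2)) i, π i r) := by
  cases b <;> simp [bPerm, Equiv.Perm.mul_apply]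

lemma Jmap_injective (n : ℕ) : Function.Injective (Jmap n) := by
  rintro ⟨b, p, q⟩ ⟨b', p', q'⟩ h
  have h1 : bPerm n b (pairFn p q) = bPerm n b' (pairFn p' q') :=
    (bEquiv n).permCongr.injective h
  have happ : ∀ i r, ((cond b (finRotate 2) 1 : Perm (Fin 2)) i, pairFn p q i r)
      = ((cond b' (finRotate 2) 1 : Perm (Fin 2)) i, pairFn p' q' i r) := by
    intro i r
    rw [← bPerm_apply, ← bPerm_apply, h1]
  have hb : b = b' := by
    have hfst := congrArg Prod.fst (happ 0 ⟨0, by positivity⟩)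
    have hfst' : (cond b (finRotate 2) 1 : Perm (Fin 2)) 0
        = (cond b' (finRotate 2) 1 : Perm (Fin 2)) 0 := hfst
    revert hfst'
    cases b <;> cases b' <;> decide
  subst hb
  have hp : p = p' := by
    ext r
    have := congrArg Prod.snd (happ 0 r)
    exact congrArg Fin.val (by simpa using this)
  have hq : q = q' := by
    ext r
    have := congrArg Prod.snd (happ 1 r)
    exact congrArg Fin.val (by simpa using this)
  rw [hp, hq]

/-- the butterfly finset -/
def bFinset : (n : ℕ) → Finset (Equiv.Perm (Fin (2 ^ n)))
  | 0 => {1}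
  | n + 1 => (Finset.univ ×ˢ bFinset n ×ˢ bFinset n).image (Jmap n)

lemma coe_bFinset : ∀ n, (bFinset n : Set (Equiv.Perm (Fin (2 ^ n)))) = nonsimpleButterfly 2 n
  | 0 => by simp [bFinset, nonsimpleButterfly]
  | n + 1 => by
    ext σ
    simp only [bFinset, Finset.coe_image, Set.mem_image, Finset.mem_coe,
      Finset.mem_product, Finset.mem_univ, true_and]
    rw [mem_butterfly_succ_iff]
    constructor
    · rintro ⟨⟨b, p, q⟩, ⟨hp, hq⟩, rfl⟩
      refine ⟨b, pairFn p q, ?_, rfl⟩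
      intro i
      rcases (by decide : ∀ j : Fin 2, j = 0 ∨ j = 1) i with rfl | rfl
      · rw [pairFn_zero, ← coe_bFinset n]; exact hp
      · rw [pairFn_one, ← coe_bFinset n]; exact hq
    · rintro ⟨b, π, hπ, rfl⟩
      refine ⟨⟨b, π 0, π 1⟩, ⟨?_, ?_⟩, ?_⟩
      · rw [← Finset.mem_coe, coe_bFinset n]; exact hπ 0
      · rw [← Finset.mem_coe, coe_bFinset n]; exact hπ 1
      · unfold Jmap
        congr 1
        congr 1
        funext i
        rcases (by decide : ∀ j : Fin 2, j = 0 ∨ j = 1) i with rfl | rfl <;> simp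

lemma card_bFinset : ∀ n, (bFinset n).card = 2 ^ (2 ^ n - 1)
  | 0 => by simp [bFinset]
  | n + 1 => by
    rw [bFinset, Finset.card_image_of_injective _ (Jmap_injective n)]
    rw [Finset.card_product, Finset.card_product, Finset.card_univ, Fintype.card_bool,
      card_bFinset n]
    have h1 : (1:ℕ) ≤ 2 ^ n := Nat.one_le_two_pow
    have h2 : 2 ^ (n + 1) = 2 * 2 ^ n := by ring
    have he : 1 + (2 ^ n - 1 + (2 ^ n - 1)) = 2 ^ (n + 1) - 1 := by omega
    calc 2 * (2 ^ (2 ^ n - 1) * 2 ^ (2 ^ n - 1))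
        = 2 ^ (1 + (2 ^ n - 1 + (2 ^ n - 1))) := by rw [pow_add, pow_add, pow_one]
      _ = 2 ^ (2 ^ (n + 1) - 1) := by rw [he]

lemma numCycles_Jmap_false {n : ℕ} (p q : Equiv.Perm (Fin (2 ^ n))) :
    numCycles (Jmap n (false, p, q)) = numCycles p + numCycles q := by
  rw [numCycles_eq_ncyc, numCycles_eq_ncyc, numCycles_eq_ncyc]
  unfold Jmap
  rw [ncyc_permCongr]
  have : bPerm n false (pairFn p q) = Equiv.prodCongrRight (pairFn p q) := by
    simp [bPerm]
  rw [this, ncyc_prodCongrRight_fin2]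
  rfl

lemma numCycles_Jmap_true {n : ℕ} (p q : Equiv.Perm (Fin (2 ^ n))) :
    numCycles (Jmap n (true, p, q)) = numCycles (q * p) := by
  rw [numCycles_eq_ncyc, numCycles_eq_ncyc]
  unfold Jmap
  rw [ncyc_permCongr]
  have : bPerm n true (pairFn p q) = swapBlk (pairFn p q) := rfl
  rw [this, ncyc_swapBlk]
  rfl

lemma sum_bFinset_succ {n : ℕ} (f : Equiv.Perm (Fin (2 ^ (n + 1))) → ℝ) :
    ∑ σ ∈ bFinset (n + 1), f σ
      = ∑ x ∈ Finset.univ ×ˢ bFinset n ×ˢ bFinset n, f (Jmap n x) := by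
  rw [bFinset, Finset.sum_image (fun x _ y _ h => Jmap_injective n h)]

lemma bSum_translate {n : ℕ} (p : Equiv.Perm (Fin (2 ^ n))) (hp : p ∈ bFinset n)
    (g : Equiv.Perm (Fin (2 ^ n)) → ℝ) :
    ∑ q ∈ bFinset n, g (q * p) = ∑ q ∈ bFinset n, g q := by
  have hinj : Function.Injective (fun q : Equiv.Perm (Fin (2 ^ n)) => q * p) :=
    fun a b h => by simpa using mul_right_cancel h
  have himg : (bFinset n).image (fun q => q * p) = bFinset n := by
    apply Finset.eq_of_subset_of_card_le
    · intro x hx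
      rw [Finset.mem_image] at hx
      obtain ⟨q, hq, rfl⟩ := hx
      rw [← Finset.mem_coe, coe_bFinset]
      exact butterfly_mul_mem n q p (by rw [← coe_bFinset n]; exact hq)
        (by rw [← coe_bFinset n]; exact hp)
    · rw [Finset.card_image_of_injective _ hinj]
  conv_rhs => rw [← himg]
  rw [Finset.sum_image (fun x _ y _ h => hinj h)]

end CountAux
section PolyAux

open Polynomial

/-- solve the functional equation given the convolution polynomial `q` -/
noncomputable def buildP (k : ℕ) (q : Polynomial ℝ) : Polynomial ℝ :=
  (Polynomial.C (1 - (∑ d ∈ Finset.Icc 2 k,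
      Polynomial.C ((1/2) * q.coeff d / ((3/2 : ℝ) ^ d - 3/2)) * Polynomial.X ^ d).eval 1))
      * Polynomial.X
    + ∑ d ∈ Finset.Icc 2 k,
        Polynomial.C ((1/2) * q.coeff d / ((3/2 : ℝ) ^ d - 3/2)) * Polynomial.X ^ d

/-- the moment polynomials -/
noncomputable def Ppoly : ℕ → Polynomial ℝ
  | 0 => 1
  | 1 => Polynomial.X
  | k + 2 =>
    buildP (k + 2) (∑ j ∈ (Finset.Ico 1 (k + 2)).attach,
      Polynomial.C (((k + 2).choose j.1 : ℝ)) * Ppoly j.1 * Ppoly (k + 2 - j.1))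
decreasing_by
  · have := Finset.mem_Ico.mp j.2; omega
  · have := Finset.mem_Ico.mp j.2; omega

lemma Ppoly_eq {k : ℕ} (hk : 2 ≤ k) :
    Ppoly k = buildP k (∑ j ∈ Finset.Ico 1 k,
      Polynomial.C ((k.choose j : ℝ)) * Ppoly j * Ppoly (k - j)) := by
  obtain ⟨m, rfl⟩ : ∃ m, k = m + 2 := ⟨k - 2, by omega⟩
  rw [Ppoly]
  congr 1
  rw [← Finset.sum_attach (Finset.Ico 1 (m + 2))
    (fun j => Polynomial.C (((m + 2).choose j : ℝ)) * Ppoly j * Ppoly (m + 2 - j))]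

lemma Ppoly_props : ∀ k : ℕ, 1 ≤ k →
    (Ppoly k).coeff 0 = 0 ∧ (Ppoly k).natDegree = k ∧ 0 < (Ppoly k).leadingCoeff ∧
    (Ppoly k).eval 1 = 1 ∧
    ∀ x : ℝ, (Ppoly k).eval (3/2 * x) - 3/2 * (Ppoly k).eval x
      = (1/2) * ∑ j ∈ Finset.Ico 1 k,
          (k.choose j : ℝ) * (Ppoly j).eval x * (Ppoly (k - j)).eval x := by
  intro k
  induction k using Nat.strong_induction_on with
  | _ k ih =>
  intro hk1
  rcases eq_or_lt_of_le hk1 with h1 | hk2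
  · -- k = 1
    have hk : k = 1 := h1.symm
    subst hk
    have hP : Ppoly 1 = Polynomial.X := by rw [Ppoly]
    rw [hP]
    refine ⟨by simp, by simp, by simp, by simp, ?_⟩
    intro x
    rw [Finset.Ico_self, Finset.sum_empty]
    simp
  · -- 2 ≤ k
    have hk2' : 2 ≤ k := hk2
    set q : Polynomial ℝ := ∑ j ∈ Finset.Ico 1 k,
      Polynomial.C ((k.choose j : ℝ)) * Ppoly j * Ppoly (k - j) with hq
    have hmem : ∀ j ∈ Finset.Ico 1 k, 1 ≤ j ∧ j < k ∧ 1 ≤ k - j ∧ k - j < k := by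
      intro j hj
      have := Finset.mem_Ico.mp hj
      omega
    -- individual facts from the induction hypothesis
    have hIH : ∀ j ∈ Finset.Ico 1 k,
        (Ppoly j).coeff 0 = 0 ∧ (Ppoly j).natDegree = j ∧ 0 < (Ppoly j).leadingCoeff ∧
        (Ppoly (k - j)).coeff 0 = 0 ∧ (Ppoly (k - j)).natDegree = k - j ∧
        0 < (Ppoly (k - j)).leadingCoeff := by
      intro j hj
      obtain ⟨a1, a2, a3, a4⟩ := hmem j hj
      obtain ⟨b1, b2, b3, -⟩ := ih j a2 a1
      obtain ⟨c1, c2, c3, -⟩ := ih (k - j) a4 a3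
      exact ⟨b1, b2, b3, c1, c2, c3⟩
    -- q facts
    have hq0 : q.coeff 0 = 0 := by
      rw [hq, Polynomial.finset_sum_coeff]
      refine Finset.sum_eq_zero fun j hj => ?_
      obtain ⟨e1, -, -, -, -, -⟩ := hIH j hj
      rw [Polynomial.coeff_zero_eq_eval_zero, Polynomial.eval_mul, Polynomial.eval_mul,
        Polynomial.eval_C]
      have h0 : (Ppoly j).eval 0 = 0 := by
        rw [← Polynomial.coeff_zero_eq_eval_zero]; exact e1
      rw [h0]; ring
    have hq1 : q.coeff 1 = 0 := by
      rw [hq, Polynomial.finset_sum_coeff]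
      refine Finset.sum_eq_zero fun j hj => ?_
      obtain ⟨e1, -, -, f1, -, -⟩ := hIH j hj
      obtain ⟨g, hg⟩ := Polynomial.X_dvd_iff.mpr e1
      obtain ⟨h, hh⟩ := Polynomial.X_dvd_iff.mpr f1
      have hx : Polynomial.C ((k.choose j : ℝ)) * Ppoly j * Ppoly (k - j)
          = ((Polynomial.C ((k.choose j : ℝ)) * g * h) * Polynomial.X) * Polynomial.X := by
        rw [hg, hh]; ring
      rw [hx]
      rw [show (1 : ℕ) = 0 + 1 from rfl, Polynomial.coeff_mul_X, Polynomial.coeff_mul_X_zero]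
    have hqdeg : q.natDegree ≤ k := by
      rw [hq]
      refine Polynomial.natDegree_sum_le_of_forall_le _ _ fun j hj => ?_
      obtain ⟨-, d2, -, -, d5, -⟩ := hIH j hj
      obtain ⟨a1, a2, -, -⟩ := hmem j hj
      calc (Polynomial.C ((k.choose j : ℝ)) * Ppoly j * Ppoly (k - j)).natDegree
          ≤ (Polynomial.C ((k.choose j : ℝ)) * Ppoly j).natDegree
              + (Ppoly (k - j)).natDegree := Polynomial.natDegree_mul_le
        _ ≤ (Ppoly j).natDegree + (Ppoly (k - j)).natDegree :=
            Nat.add_le_add_right (Polynomial.natDegree_C_mul_le _ _) _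
        _ = j + (k - j) := by rw [d2, d5]
        _ = k := by omega
    have hqk : 0 < q.coeff k := by
      rw [hq, Polynomial.finset_sum_coeff]
      refine Finset.sum_pos (fun j hj => ?_) (Finset.nonempty_Ico.mpr (by omega))
      obtain ⟨-, d2, d3, -, d5, d6⟩ := hIH j hj
      obtain ⟨a1, a2, -, -⟩ := hmem j hj
      have hchoose : (0 : ℝ) < (k.choose j : ℝ) := by
        have := Nat.choose_pos (le_of_lt a2)
        positivity
      have hdeg : (Polynomial.C ((k.choose j : ℝ)) * Ppoly j).natDegree = j := by
        rw [Polynomial.natDegree_C_mul (ne_of_gt hchoose), d2]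
      have hkk : k = (Polynomial.C ((k.choose j : ℝ)) * Ppoly j).natDegree
          + (Ppoly (k - j)).natDegree := by rw [hdeg, d5]; omega
      have hco := Polynomial.coeff_mul_degree_add_degree
        (Polynomial.C ((k.choose j : ℝ)) * Ppoly j) (Ppoly (k - j))
      rw [hdeg, d5] at hco
      have hjk : j + (k - j) = k := by omega
      rw [hjk] at hco
      rw [hco, Polynomial.leadingCoeff_mul, Polynomial.leadingCoeff_C]
      positivity
    -- the solved polynomial
    have hpowne : ∀ d : ℕ, 2 ≤ d → (0 : ℝ) < (3/2 : ℝ) ^ d - 3/2 := by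
      intro d hd
      have : (3/2 : ℝ) ^ 1 < (3/2 : ℝ) ^ d :=
        pow_lt_pow_right₀ (by norm_num) (by omega)
      simp only [pow_one] at this
      linarith
    set a : ℕ → ℝ := fun d => (1/2) * q.coeff d / ((3/2 : ℝ) ^ d - 3/2) with ha
    set S : Polynomial ℝ := ∑ d ∈ Finset.Icc 2 k,
        Polynomial.C (a d) * Polynomial.X ^ d with hS
    have hSdef : (∑ d ∈ Finset.Icc 2 k,
        Polynomial.C ((1/2) * q.coeff d / ((3/2 : ℝ) ^ d - 3/2)) * Polynomial.X ^ d)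
        = ∑ d ∈ Finset.Icc 2 k, Polynomial.C (a d) * Polynomial.X ^ d := rfl
    have hPk : Ppoly k = Polynomial.C (1 - S.eval 1) * Polynomial.X + S := by
      rw [Ppoly_eq hk2', buildP, ← hq, hSdef, ← hS]
    have hScoeff : ∀ d : ℕ, S.coeff d = if d ∈ Finset.Icc 2 k then a d else 0 := by
      intro d
      rw [hS, Polynomial.finset_sum_coeff]
      have hpt : ∀ e ∈ Finset.Icc 2 k, (Polynomial.C (a e) * Polynomial.X ^ e).coeff d
          = if e = d then a e else 0 := by
        intro e _
        rw [Polynomial.coeff_C_mul, Polynomial.coeff_X_pow]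
        by_cases h : d = e
        · simp [h]
        · simp [h, Ne.symm h]
      rw [Finset.sum_congr rfl hpt, Finset.sum_ite_eq' (Finset.Icc 2 k) d a]
    have hcoeff0 : (Ppoly k).coeff 0 = 0 := by
      rw [hPk, Polynomial.coeff_add, Polynomial.coeff_C_mul, Polynomial.coeff_X_zero,
        hScoeff 0]
      simp
    have hcoeffk : (Ppoly k).coeff k = a k := by
      rw [hPk, Polynomial.coeff_add, Polynomial.coeff_C_mul, Polynomial.coeff_X,
        hScoeff k, if_pos (Finset.mem_Icc.mpr ⟨hk2', le_refl k⟩), if_neg (by omega)]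
      ring
    have hak : 0 < a k := by
      rw [ha]
      exact div_pos (by linarith) (hpowne k hk2')
    have hdegle : (Ppoly k).natDegree ≤ k := by
      rw [Polynomial.natDegree_le_iff_coeff_eq_zero]
      intro N hN
      rw [hPk, Polynomial.coeff_add, Polynomial.coeff_C_mul, Polynomial.coeff_X,
        hScoeff N, if_neg (by omega), if_neg (fun hmem => by
          have := Finset.mem_Icc.mp hmem; omega)]
      ring
    have hdeg : (Ppoly k).natDegree = k :=
      le_antisymm hdegle (Polynomial.le_natDegree_of_ne_zero (hcoeffk ▸ ne_of_gt hak))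
    have hlead : 0 < (Ppoly k).leadingCoeff := by
      rw [Polynomial.leadingCoeff, hdeg, hcoeffk]; exact hak
    have heval1 : (Ppoly k).eval 1 = 1 := by
      rw [hPk]; simp
    refine ⟨hcoeff0, hdeg, hlead, heval1, ?_⟩
    intro x
    have hSeval : ∀ y : ℝ, S.eval y = ∑ d ∈ Finset.Icc 2 k, a d * y ^ d := by
      intro y
      rw [hS, Polynomial.eval_finset_sum]
      exact Finset.sum_congr rfl fun d _ => by simp
    have hqeval : q.eval x = ∑ j ∈ Finset.Ico 1 k,
        (k.choose j : ℝ) * (Ppoly j).eval x * (Ppoly (k - j)).eval x := by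
      rw [hq, Polynomial.eval_finset_sum]
      exact Finset.sum_congr rfl fun j _ => by simp
    have hqsum : q.eval x = ∑ d ∈ Finset.Icc 2 k, q.coeff d * x ^ d := by
      rw [Polynomial.eval_eq_sum_range' (lt_of_le_of_lt hqdeg (Nat.lt_succ_self k)) x]
      symm
      apply Finset.sum_subset
      · intro d hd
        exact Finset.mem_range.mpr (by have := (Finset.mem_Icc.mp hd).2; omega)
      · intro d hd hnd
        have hdk : d < k + 1 := Finset.mem_range.mp hd
        have hcases : d = 0 ∨ d = 1 := by
          by_contra hcon
          push_neg at hcon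
          exact hnd (Finset.mem_Icc.mpr ⟨by omega, by omega⟩)
        rcases hcases with rfl | rfl
        · rw [hq0]; ring
        · rw [hq1]; ring
    have hLHS : (Ppoly k).eval (3/2 * x) - 3/2 * (Ppoly k).eval x
        = ∑ d ∈ Finset.Icc 2 k, a d * ((3/2 : ℝ) ^ d - 3/2) * x ^ d := by
      rw [hPk]
      simp only [Polynomial.eval_add, Polynomial.eval_mul, Polynomial.eval_C,
        Polynomial.eval_X]
      simp only [hSeval]
      have hcomb : ∀ d ∈ Finset.Icc 2 k,
          a d * (3/2*x)^d - 3/2 * (a d * x^d) = a d * ((3/2 : ℝ)^d - 3/2) * x^d := by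
        intro d _
        rw [mul_pow]
        ring
      rw [← Finset.sum_congr rfl hcomb, Finset.sum_sub_distrib, ← Finset.mul_sum]
      ring
    rw [hLHS, ← hqeval, hqsum, Finset.mul_sum]
    refine Finset.sum_congr rfl fun d hd => ?_
    have hd2 := (Finset.mem_Icc.mp hd).1
    have hne : ((3/2 : ℝ) ^ d - 3/2) ≠ 0 := ne_of_gt (hpowne d hd2)
    have hval : a d * ((3/2 : ℝ) ^ d - 3/2) = 1/2 * q.coeff d := by
      rw [ha]
      exact div_mul_cancel₀ _ hne
    rw [hval]
    ring

end PolyAux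
section FinalAux

open Equiv Equiv.Perm

lemma double_binom {γ δ : Type*} (s : Finset γ) (t : Finset δ) (u : γ → ℝ) (v : δ → ℝ)
    (k : ℕ) :
    ∑ p ∈ s, ∑ q ∈ t, (u p + v q) ^ k
      = ∑ j ∈ Finset.range (k + 1),
          (k.choose j : ℝ) * (∑ p ∈ s, u p ^ j) * (∑ q ∈ t, v q ^ (k - j)) := by
  have h1 : ∀ p : γ, ∑ q ∈ t, (u p + v q) ^ k
      = ∑ j ∈ Finset.range (k + 1),
          (k.choose j : ℝ) * u p ^ j * (∑ q ∈ t, v q ^ (k - j)) := by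
    intro p
    have hpt : ∀ q ∈ t, (u p + v q) ^ k
        = ∑ j ∈ Finset.range (k + 1), u p ^ j * v q ^ (k - j) * (k.choose j : ℝ) :=
      fun q _ => add_pow (u p) (v q) k
    rw [Finset.sum_congr rfl hpt, Finset.sum_comm]
    refine Finset.sum_congr rfl fun j _ => ?_
    calc ∑ q ∈ t, u p ^ j * v q ^ (k - j) * (k.choose j : ℝ)
        = ∑ q ∈ t, ((k.choose j : ℝ) * u p ^ j) * v q ^ (k - j) :=
          Finset.sum_congr rfl fun q _ => by ring
      _ = ((k.choose j : ℝ) * u p ^ j) * ∑ q ∈ t, v q ^ (k - j) := by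
          rw [← Finset.mul_sum]
      _ = _ := by ring
  rw [Finset.sum_congr rfl fun p _ => h1 p, Finset.sum_comm]
  refine Finset.sum_congr rfl fun j _ => ?_
  calc ∑ p ∈ s, (k.choose j : ℝ) * u p ^ j * (∑ q ∈ t, v q ^ (k - j))
      = ∑ p ∈ s, ((k.choose j : ℝ) * (∑ q ∈ t, v q ^ (k - j))) * u p ^ j :=
        Finset.sum_congr rfl fun p _ => by ring
    _ = ((k.choose j : ℝ) * (∑ q ∈ t, v q ^ (k - j))) * ∑ p ∈ s, u p ^ j := by
        rw [← Finset.mul_sum]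
    _ = _ := by ring

lemma bFinset_moment : ∀ n : ℕ, ∀ k : ℕ, 1 ≤ k →
    ∑ σ ∈ bFinset n, (numCycles σ : ℝ) ^ k
      = (2 : ℝ) ^ (2 ^ n - 1) * (Ppoly k).eval ((3/2 : ℝ) ^ n) := by
  intro n
  induction n with
  | zero =>
    intro k hk
    have h1 : numCycles (1 : Equiv.Perm (Fin (2 ^ 0))) = 1 := by
      rw [numCycles, Equiv.Perm.cycleType_one]
      simp
    obtain ⟨-, -, -, he, -⟩ := Ppoly_props k hk
    show ∑ σ ∈ ({1} : Finset (Equiv.Perm (Fin (2 ^ 0)))), (numCycles σ : ℝ) ^ k = _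
    rw [Finset.sum_singleton, h1]
    norm_num [he]
  | succ n ih =>
    intro k hk
    set D : ℝ := (2 : ℝ) ^ (2 ^ n - 1) with hD
    set e : ℕ → ℝ := fun j => (Ppoly j).eval ((3/2 : ℝ) ^ n) with he
    set M : ℕ → ℝ := fun j => ∑ σ ∈ bFinset n, (numCycles σ : ℝ) ^ j with hM
    have hM0 : M 0 = D := by
      rw [hM]
      simp only [pow_zero]
      rw [Finset.sum_const, card_bFinset n, nsmul_eq_mul, mul_one, hD]
      push_cast
      ring
    have hMj : ∀ j, 1 ≤ j → M j = D * e j := fun j hj => ih j hj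
    -- decompose the sum
    rw [sum_bFinset_succ, Finset.sum_product, Fintype.sum_bool]
    have htrue : ∑ x ∈ bFinset n ×ˢ bFinset n,
        (numCycles (Jmap n (true, x)) : ℝ) ^ k = D * M k := by
      rw [Finset.sum_product]
      have hin : ∀ p ∈ bFinset n, ∑ q ∈ bFinset n,
          (numCycles (Jmap n (true, p, q)) : ℝ) ^ k = M k := by
        intro p hp
        have : ∀ q ∈ bFinset n, (numCycles (Jmap n (true, p, q)) : ℝ) ^ k
            = (numCycles (q * p) : ℝ) ^ k := by
          intro q _
          rw [numCycles_Jmap_true]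
        rw [Finset.sum_congr rfl this,
          bSum_translate p hp (fun σ => (numCycles σ : ℝ) ^ k)]
      rw [Finset.sum_congr rfl hin, Finset.sum_const, card_bFinset n, nsmul_eq_mul, hD]
      push_cast
      ring
    have hfalse : ∑ x ∈ bFinset n ×ˢ bFinset n,
        (numCycles (Jmap n (false, x)) : ℝ) ^ k
        = ∑ j ∈ Finset.range (k + 1), (k.choose j : ℝ) * M j * M (k - j) := by
      rw [Finset.sum_product]
      have hpt : ∀ p ∈ bFinset n, ∀ q ∈ bFinset n,
          (numCycles (Jmap n (false, p, q)) : ℝ) ^ k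
          = ((numCycles p : ℝ) + (numCycles q : ℝ)) ^ k := by
        intro p _ q _
        rw [numCycles_Jmap_false]
        push_cast
        ring
      rw [Finset.sum_congr rfl fun p hp =>
        Finset.sum_congr rfl fun q hq => hpt p hp q hq]
      rw [double_binom]
    rw [htrue, hfalse]
    -- split the binomial sum
    have hsplit : ∑ j ∈ Finset.range (k + 1), (k.choose j : ℝ) * M j * M (k - j)
        = M 0 * M k + ((∑ j ∈ Finset.Ico 1 k, (k.choose j : ℝ) * M j * M (k - j))
            + M k * M 0) := by
      rw [Finset.sum_range_succ, Finset.range_eq_Ico,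
        Finset.sum_eq_sum_Ico_succ_bot (by omega : 0 < k)]
      simp only [Nat.choose_zero_right, Nat.choose_self, Nat.cast_one, Nat.sub_zero,
        Nat.sub_self, one_mul]
      ring
    rw [hsplit, hM0, hMj k hk]
    have hmid : ∑ j ∈ Finset.Ico 1 k, (k.choose j : ℝ) * M j * M (k - j)
        = D * D * ∑ j ∈ Finset.Ico 1 k, (k.choose j : ℝ) * e j * e (k - j) := by
      rw [Finset.mul_sum]
      refine Finset.sum_congr rfl fun j hj => ?_
      have hjm := Finset.mem_Ico.mp hj
      rw [hMj j hjm.1, hMj (k - j) (by omega)]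
      ring
    rw [hmid]
    -- use the functional equation
    obtain ⟨-, -, -, -, hfe⟩ := Ppoly_props k hk
    have hfex := hfe ((3/2 : ℝ) ^ n)
    have hev : (Ppoly k).eval ((3/2 : ℝ) ^ (n + 1))
        = 3/2 * e k + 1/2 * ∑ j ∈ Finset.Ico 1 k,
            (k.choose j : ℝ) * e j * e (k - j) := by
      have hp : ((3:ℝ)/2) ^ (n + 1) = 3/2 * (3/2 : ℝ) ^ n := by
        rw [pow_succ]; ring
      rw [hp]
      have := hfex
      simp only [he]
      linarith [this]
    rw [hev]
    have hcard : (2 : ℝ) ^ (2 ^ (n + 1) - 1) = 2 * D * D := by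
      have h1 : (1:ℕ) ≤ 2 ^ n := Nat.one_le_two_pow
      have h2 : 2 ^ (n + 1) = 2 * 2 ^ n := by ring
      have hnat : (2:ℕ) ^ (2 ^ (n + 1) - 1) = 2 * 2 ^ (2 ^ n - 1) * 2 ^ (2 ^ n - 1) := by
        calc (2:ℕ) ^ (2 ^ (n + 1) - 1) = 2 ^ (1 + (2 ^ n - 1) + (2 ^ n - 1)) := by
              congr 1; omega
          _ = 2 * 2 ^ (2 ^ n - 1) * 2 ^ (2 ^ n - 1) := by
              rw [pow_add, pow_add, pow_one]
      rw [hD]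
      exact_mod_cast hnat
    rw [hcard]
    ring

end FinalAux

/-- With `λ = 3/2`, there are polynomials `p_k` with `p₁ = X` and, for `k ≥ 2`:
degree exactly `k`, `p_k(0) = 0`, `p_k(1) = 1`, positive leading coefficient, and
`p_k(λx) − λ·p_k(x) = (λ−1)·Σ_{j=1}^{k−1} C(k,j)·p_j(x)·p_{k−j}(x)`; moreover the
`k`-th moment of the number of cycles over uniform `B_{2^n}` equals `p_k((3/2)ⁿ)`. -/
theorem nonsimpleButterfly_cycle_moment_polynomials :
    ∃ P : ℕ → Polynomial ℝ,
      P 1 = Polynomial.X ∧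
      (∀ k : ℕ, 2 ≤ k →
        (P k).natDegree = k ∧ (P k).coeff 0 = 0 ∧ (P k).eval 1 = 1 ∧
        0 < (P k).leadingCoeff ∧
        ∀ x : ℝ, (P k).eval ((3 / 2) * x) - (3 / 2) * (P k).eval x =
          ((3 : ℝ) / 2 - 1) * ∑ j ∈ Finset.Ico 1 k,
            (k.choose j : ℝ) * (P j).eval x * (P (k - j)).eval x) ∧
      (∀ n : ℕ, ∀ k : ℕ, 1 ≤ k →
        (1 / (2 : ℝ) ^ (2 ^ n - 1)) *
            ∑ᶠ σ ∈ nonsimpleButterfly 2 n, (numCycles σ : ℝ) ^ k =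
          (P k).eval (((3 : ℝ) / 2) ^ n)) := by
  refine ⟨Ppoly, by rw [Ppoly], ?_, ?_⟩
  · intro k hk
    obtain ⟨h0, hdeg, hlc, he1, hfe⟩ := Ppoly_props k (by omega)
    refine ⟨hdeg, h0, he1, hlc, ?_⟩
    intro x
    have := hfe x
    have hc : ((3 : ℝ) / 2 - 1) = 1 / 2 := by norm_num
    rw [hc]
    exact this
  · intro n k hk
    rw [← coe_bFinset n, finsum_mem_coe_finset, bFinset_moment n k hk]
    have h2 : ((2 : ℝ) ^ (2 ^ n - 1)) ≠ 0 := by positivity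
    field_simp
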